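/- (Modified triples for l = 3.) Let m, n ≥ 3 and set N = m + n − 3. Then the Brauer representation triples γ for the pair (m,n) with ht(γ) ≤ N which possess at least one N-excluded ancestor are exactly the three triples (1, [2,1^{m−3}], 1^{n−1}), (1, 1^{m−1}, [2,1^{n−3}]) and (2, 1^{m−2}, 1^{n−2}); in particular there are exactly 3 = Z_univ(2) of them. -/
import Mathlib


/-- A Brauer representation triple for the pair `(m, n)`: a natural number
`k ≤ min m n`, a partition `γ₊` of `m - k` and a partition `γ₋` of `n - k`. -/
structure BRT (m n : ℕ) where
  k : ℕ
  k_le : k ≤ min m n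
  gp : Nat.Partition (m - k)
  gm : Nat.Partition (n - k)

namespace BRT

/-- The height of a Brauer representation triple: the total number of parts of the
two partitions (the sum of the first-column lengths of the Young diagrams). -/
def ht {m n : ℕ} (γ : BRT m n) : ℕ :=
  Multiset.card γ.gp.parts + Multiset.card γ.gm.parts

end BRT

/-- `AddBox lam mu` : the multiset of parts `mu` is obtained from the multiset of parts
`lam` by adding one box to the Young diagram (either as a new part equal to `1`, or by
increasing one existing part by `1`). -/
def AddBox (lam mu : Multiset ℕ) : Prop :=
  mu = 1 ::ₘ lam ∨ ∃ a ∈ lam, mu = (a + 1) ::ₘ lam.erase a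

/-- `γ'` (a triple at depth `d+1`) is a parent of `γ` (a triple at depth `d`):
either (a) `k' = k`, `γ₊' = γ₊` and `γ₋` is obtained from `γ₋'` by adding one box, or
(b) `k' = k - 1`, `γ₋' = γ₋` and `γ₊'` is obtained from `γ₊` by adding one box. -/
def IsParent {m n₁ n₂ : ℕ} (γ : BRT m n₁) (γ' : BRT m n₂) : Prop :=
  (γ'.k = γ.k ∧ γ'.gp.parts = γ.gp.parts ∧ AddBox γ'.gm.parts γ.gm.parts)
  ∨ (γ'.k = γ.k - 1 ∧ γ'.gm.parts = γ.gm.parts ∧ AddBox γ.gp.parts γ'.gp.parts)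

/-- `IsAncestor m n d d' γ γ'` : the triple `γ'` at depth `d'` for the pair `(m,n)` is an
ancestor of the triple `γ` at depth `d`, i.e. `γ'` is reachable from `γ` by iterating
the parent relation `d' - d` times (one step for each unit increase of depth). -/
inductive IsAncestor (m n : ℕ) : ∀ (d d' : ℕ), BRT m (n - d) → BRT m (n - d') → Prop
  | step {d : ℕ} (γ : BRT m (n - d)) (γ' : BRT m (n - (d + 1))) :
      IsParent γ γ' → IsAncestor m n d (d + 1) γ γ'
  | tail {d d' : ℕ} {γ : BRT m (n - d)} {γ' : BRT m (n - d')} (γ'' : BRT m (n - (d' + 1))) :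
      IsAncestor m n d d' γ γ' → IsParent γ' γ'' → IsAncestor m n d (d' + 1) γ γ''

/-- `Zuniv s` : the number of quadruples `(Δ, k, λ₁, λ₂)` with `Δ ≥ 1`, `k ≥ 0` natural
numbers and `λ₁, λ₂` partitions (of arbitrary natural numbers) such that
`Δ + 2k + |λ₁| + |λ₂| = s`. -/
noncomputable def Zuniv (s : ℕ) : ℕ :=
  Nat.card {q : (ℕ × ℕ) × (Σ a : ℕ, Nat.Partition a) × (Σ a : ℕ, Nat.Partition a) //
    1 ≤ q.1.1 ∧ q.1.1 + 2 * q.1.2 + q.2.1.1 + q.2.2.1 = s}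

/-- `p a` : the number of partitions of `a` (with `p 0 = 1`). -/
def p (a : ℕ) : ℕ := Fintype.card (Nat.Partition a)


section aux


lemma myCard_le_sum (s : Multiset ℕ) (h : ∀ x ∈ s, 0 < x) : Multiset.card s ≤ s.sum := by
  induction s using Multiset.induction with
  | empty => simp
  | cons a t ih =>
    have ha := h a (Multiset.mem_cons_self a t)
    have := ih (fun x hx => h x (Multiset.mem_cons_of_mem hx))
    simp only [Multiset.card_cons, Multiset.sum_cons]; omega

lemma myMem_bound (s : Multiset ℕ) (h : ∀ x ∈ s, 0 < x) {a : ℕ} (ha : a ∈ s) :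
    a + Multiset.card s ≤ s.sum + 1 := by
  have he := Multiset.cons_erase ha
  have h1 : s.sum = a + (s.erase a).sum := by
    conv_lhs => rw [← he]
    simp
  have h2 : Multiset.card s = Multiset.card (s.erase a) + 1 := by
    conv_lhs => rw [← he]; simp
  have h3 := myCard_le_sum (s.erase a) (fun x hx => h x (Multiset.mem_of_mem_erase hx))
  omega

lemma myEq_rep (s : Multiset ℕ) (h : ∀ x ∈ s, 0 < x) (hc : Multiset.card s = s.sum) :
    s = Multiset.replicate s.sum 1 := by
  rw [Multiset.eq_replicate]
  refine ⟨hc, fun b hb => ?_⟩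
  have := myMem_bound s h hb
  have := h b hb
  omega

lemma myEq_two_rep (s : Multiset ℕ) (h : ∀ x ∈ s, 0 < x) (hc : Multiset.card s + 1 = s.sum) :
    s = 2 ::ₘ Multiset.replicate (s.sum - 2) 1 := by
  have hex : ∃ a ∈ s, 2 ≤ a := by
    by_contra hno
    push_neg at hno
    have : s = Multiset.replicate (Multiset.card s) 1 := by
      rw [Multiset.eq_replicate_card]
      intro b hb; have := h b hb; have := hno b hb; omega
    rw [this] at hc
    simp at hc
  obtain ⟨a, ha, ha2⟩ := hex
  have haeq : a = 2 := by
    have := myMem_bound s h ha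
    omega
  subst haeq
  have he := (Multiset.cons_erase ha).symm
  have h1 : s.sum = 2 + (s.erase 2).sum := by conv_lhs => rw [he]; simp
  have h2 : Multiset.card s = Multiset.card (s.erase 2) + 1 := by conv_lhs => rw [he]; simp
  have h3 : (s.erase 2) = Multiset.replicate ((s.erase 2).sum) 1 :=
    myEq_rep _ (fun x hx => h x (Multiset.mem_of_mem_erase hx)) (by omega)
  have h4 : (s.erase 2).sum = s.sum - 2 := by omega
  rw [h4] at h3
  conv_lhs => rw [he, h3]

lemma addBox_facts {lam mu : Multiset ℕ} (h : AddBox lam mu) :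
    mu.sum = lam.sum + 1 ∧ Multiset.card lam ≤ Multiset.card mu ∧
      Multiset.card mu ≤ Multiset.card lam + 1 := by
  rcases h with rfl | ⟨a, ha, rfl⟩
  · simp; omega
  · have he := Multiset.cons_erase ha
    have h1 : lam.sum = a + (lam.erase a).sum := by conv_lhs => rw [← he]; simp
    have h2 : Multiset.card lam = Multiset.card (lam.erase a) + 1 := by
      conv_lhs => rw [← he]; simp
    simp only [Multiset.sum_cons, Multiset.card_cons]
    omega


lemma isParent_facts {m n₁ n₂ : ℕ} {γ : BRT m n₁} {γ' : BRT m n₂} (h : IsParent γ γ') :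
    (γ'.k = γ.k ∧ Multiset.card γ'.gp.parts = Multiset.card γ.gp.parts ∧
      Multiset.card γ'.gm.parts ≤ Multiset.card γ.gm.parts ∧
      Multiset.card γ.gm.parts ≤ Multiset.card γ'.gm.parts + 1)
    ∨ (γ'.k + 1 = γ.k ∧ Multiset.card γ'.gm.parts = Multiset.card γ.gm.parts ∧
      Multiset.card γ.gp.parts ≤ Multiset.card γ'.gp.parts ∧
      Multiset.card γ'.gp.parts ≤ Multiset.card γ.gp.parts + 1) := by
  rcases h with ⟨hk, hp, hab⟩ | ⟨hk, hmm, hab⟩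
  · obtain ⟨h1, h2, h3⟩ := addBox_facts hab
    exact Or.inl ⟨hk, by rw [hp], h2, h3⟩
  · obtain ⟨h1, h2, h3⟩ := addBox_facts hab
    have hs : γ.gp.parts.sum = m - γ.k := γ.gp.parts_sum
    have hs' : γ'.gp.parts.sum = m - γ'.k := γ'.gp.parts_sum
    have hk1 : γ.k ≤ m := le_trans γ.k_le (min_le_left _ _)
    have hk2 : γ'.k ≤ m := le_trans γ'.k_le (min_le_left _ _)
    exact Or.inr ⟨by omega, by rw [hmm], h2, h3⟩


lemma ancestor_facts {m n : ℕ} {d d' : ℕ} {γ : BRT m (n - d)} {γ' : BRT m (n - d')}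
    (h : IsAncestor m n d d' γ γ') :
    γ'.k ≤ γ.k ∧ γ.k - γ'.k ≤ d' - d ∧ d < d' ∧
    Multiset.card γ.gp.parts ≤ Multiset.card γ'.gp.parts ∧
    Multiset.card γ'.gp.parts ≤ Multiset.card γ.gp.parts + (γ.k - γ'.k) ∧
    Multiset.card γ'.gm.parts ≤ Multiset.card γ.gm.parts ∧
    Multiset.card γ.gm.parts ≤ Multiset.card γ'.gm.parts + ((d' - d) - (γ.k - γ'.k)) := by
  induction h with
  | step γ γ' hp =>
    rcases isParent_facts hp with ⟨h1, h2, h3, h4⟩ | ⟨h1, h2, h3, h4⟩ <;> omega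
  | tail γ'' hanc hp ih =>
    rcases isParent_facts hp with ⟨h1, h2, h3, h4⟩ | ⟨h1, h2, h3, h4⟩ <;> omega

set_option maxHeartbeats 1600000 in
lemma forward_classify {m n : ℕ} (hm : 3 ≤ m) (hn : 3 ≤ n) {γ : BRT m (n - 0)}
    (hht : γ.ht ≤ m + n - 3) {d' : ℕ} {γ' : BRT m (n - d')}
    (h : IsAncestor m n 0 d' γ γ') (hex : m + n - 3 < γ'.ht) :
    (γ.k = 1 ∧ γ.gp.parts = 2 ::ₘ Multiset.replicate (m - 3) 1 ∧
        γ.gm.parts = Multiset.replicate (n - 1) 1) ∨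
    (γ.k = 1 ∧ γ.gp.parts = Multiset.replicate (m - 1) 1 ∧
        γ.gm.parts = 2 ::ₘ Multiset.replicate (n - 3) 1) ∨
    (γ.k = 2 ∧ γ.gp.parts = Multiset.replicate (m - 2) 1 ∧
        γ.gm.parts = Multiset.replicate (n - 2) 1) := by
  obtain ⟨i1, i2, i3, i4, i5, i6, i7⟩ := ancestor_facts h
  have sp : γ.gp.parts.sum = m - γ.k := γ.gp.parts_sum
  have sm : γ.gm.parts.sum = n - 0 - γ.k := γ.gm.parts_sum
  have sp' : γ'.gp.parts.sum = m - γ'.k := γ'.gp.parts_sum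
  have sm' : γ'.gm.parts.sum = n - d' - γ'.k := γ'.gm.parts_sum
  have cp := myCard_le_sum _ (fun x hx => γ.gp.parts_pos hx)
  have cm := myCard_le_sum _ (fun x hx => γ.gm.parts_pos hx)
  have cp' := myCard_le_sum _ (fun x hx => γ'.gp.parts_pos hx)
  have cm' := myCard_le_sum _ (fun x hx => γ'.gm.parts_pos hx)
  have hk1 : γ.k ≤ m := le_trans γ.k_le (min_le_left _ _)
  have hk2 : γ.k ≤ n - 0 := le_trans γ.k_le (min_le_right _ _)
  unfold BRT.ht at hht hex
  rw [sp] at cp; rw [sm] at cm; rw [sp'] at cp'; rw [sm'] at cm'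
  have key : (γ.k = 1 ∧ Multiset.card γ.gp.parts = m - 2 ∧
        Multiset.card γ.gm.parts = n - 1) ∨
      (γ.k = 1 ∧ Multiset.card γ.gp.parts = m - 1 ∧
        Multiset.card γ.gm.parts = n - 2) ∨
      (γ.k = 2 ∧ Multiset.card γ.gp.parts = m - 2 ∧
        Multiset.card γ.gm.parts = n - 2) := by omega
  have posp : ∀ x ∈ γ.gp.parts, 0 < x := fun x hx => γ.gp.parts_pos hx
  have posm : ∀ x ∈ γ.gm.parts, 0 < x := fun x hx => γ.gm.parts_pos hx
  rcases key with ⟨k1, c1, c2⟩ | ⟨k1, c1, c2⟩ | ⟨k1, c1, c2⟩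
  · refine Or.inl ⟨k1, ?_, ?_⟩
    · have := myEq_two_rep γ.gp.parts posp (by omega)
      rw [this, sp, k1]
      congr 1 <;> omega
    · have := myEq_rep γ.gm.parts posm (by omega)
      rw [this, sm, k1]
      congr 1 <;> omega
  · refine Or.inr (Or.inl ⟨k1, ?_, ?_⟩)
    · have := myEq_rep γ.gp.parts posp (by omega)
      rw [this, sp, k1]
    · have := myEq_two_rep γ.gm.parts posm (by omega)
      rw [this, sm, k1]
      congr 1 <;> omega
  · refine Or.inr (Or.inr ⟨k1, ?_, ?_⟩)
    · have := myEq_rep γ.gp.parts posp (by omega)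
      rw [this, sp, k1]
    · have := myEq_rep γ.gm.parts posm (by omega)
      rw [this, sm, k1]
      congr 1 <;> omega

lemma reverse_construct {m n : ℕ} (hm : 3 ≤ m) (hn : 3 ≤ n) {γ : BRT m (n - 0)}
    (hchar :
      (γ.k = 1 ∧ γ.gp.parts = 2 ::ₘ Multiset.replicate (m - 3) 1 ∧
          γ.gm.parts = Multiset.replicate (n - 1) 1) ∨
      (γ.k = 1 ∧ γ.gp.parts = Multiset.replicate (m - 1) 1 ∧
          γ.gm.parts = 2 ::ₘ Multiset.replicate (n - 3) 1) ∨
      (γ.k = 2 ∧ γ.gp.parts = Multiset.replicate (m - 2) 1 ∧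
          γ.gm.parts = Multiset.replicate (n - 2) 1)) :
    γ.ht ≤ m + n - 3 ∧
      ∃ d' : ℕ, ∃ γ' : BRT m (n - d'),
        IsAncestor m n 0 d' γ γ' ∧ m + n - 3 < γ'.ht := by
  have hcpcm : (Multiset.card γ.gp.parts = m - 2 ∧ Multiset.card γ.gm.parts = n - 1 ∧ γ.k = 1) ∨
      (Multiset.card γ.gp.parts = m - 1 ∧ Multiset.card γ.gm.parts = n - 2 ∧ γ.k = 1) ∨
      (Multiset.card γ.gp.parts = m - 2 ∧ Multiset.card γ.gm.parts = n - 2 ∧ γ.k = 2) := by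
    rcases hchar with ⟨hk, h1, h2⟩ | ⟨hk, h1, h2⟩ | ⟨hk, h1, h2⟩
    · exact Or.inl ⟨by rw [h1]; simp; omega, by rw [h2]; simp, hk⟩
    · exact Or.inr (Or.inl ⟨by rw [h1]; simp, by rw [h2]; simp; omega, hk⟩)
    · exact Or.inr (Or.inr ⟨by rw [h1]; simp, by rw [h2]; simp, hk⟩)
  have hposp : ∀ x ∈ γ.gp.parts, 0 < x := fun x hx => γ.gp.parts_pos hx
  have hposm : ∀ x ∈ γ.gm.parts, 0 < x := fun x hx => γ.gm.parts_pos hx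
  rcases hcpcm with ⟨hcp, hcm, hk⟩ | ⟨hcp, hcm, hk⟩ | ⟨hcp, hcm, hk⟩
  case inl | inr.inl =>
    -- k = 1 cases : one step
    refine ⟨by unfold BRT.ht; omega, 1, ?_⟩
    have hsum : (1 ::ₘ γ.gp.parts).sum = m - (0:ℕ) := by
      have := γ.gp.parts_sum
      have : γ.gp.parts.sum = m - 1 := by rw [this, hk]
      simp [Multiset.sum_cons, this]
      omega
    have hsum2 : γ.gm.parts.sum = n - 1 - (0:ℕ) := by
      have := γ.gm.parts_sum
      omega
    refine ⟨⟨0, Nat.zero_le _,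
      ⟨1 ::ₘ γ.gp.parts, ?_, hsum⟩, ⟨γ.gm.parts, fun {i} hi => γ.gm.parts_pos hi, hsum2⟩⟩, ?_, ?_⟩
    · intro i hi
      rcases Multiset.mem_cons.mp hi with h | h
      · omega
      · exact γ.gp.parts_pos h
    · exact IsAncestor.step _ _ (Or.inr ⟨by simp [hk], rfl, Or.inl rfl⟩)
    · unfold BRT.ht
      simp only [Multiset.card_cons]
      omega
  case inr.inr =>
    -- k = 2 : two steps
    refine ⟨by unfold BRT.ht; omega, 2, ?_⟩
    have hsp : γ.gp.parts.sum = m - 2 := by have := γ.gp.parts_sum; omega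
    have hsm : γ.gm.parts.sum = n - 2 := by have := γ.gm.parts_sum; omega
    have pos1 : ∀ {i : ℕ}, i ∈ (1 ::ₘ γ.gp.parts) → 0 < i := by
      intro i hi
      rcases Multiset.mem_cons.mp hi with h | h
      · omega
      · exact γ.gp.parts_pos h
    have pos2 : ∀ {i : ℕ}, i ∈ (1 ::ₘ 1 ::ₘ γ.gp.parts) → 0 < i := by
      intro i hi
      rcases Multiset.mem_cons.mp hi with h | h
      · omega
      · exact pos1 h
    refine ⟨⟨0, Nat.zero_le _,
      ⟨1 ::ₘ 1 ::ₘ γ.gp.parts, pos2, by simp [Multiset.sum_cons, hsp]; omega⟩,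
      ⟨γ.gm.parts, fun {i} hi => γ.gm.parts_pos hi, by omega⟩⟩, ?_, ?_⟩
    · exact IsAncestor.tail (d := 0) (d' := 1)
        (γ' := (⟨1, le_min (by omega) (by omega),
          ⟨1 ::ₘ γ.gp.parts, pos1, by simp [Multiset.sum_cons, hsp]; omega⟩,
          ⟨γ.gm.parts, fun {i} hi => γ.gm.parts_pos hi, by omega⟩⟩ : BRT m (n - 1)))
        _ (IsAncestor.step _ _ (Or.inr ⟨by simp [hk], rfl, Or.inl rfl⟩))
        (Or.inr ⟨by simp, rfl, Or.inl rfl⟩)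
    · unfold BRT.ht
      simp only [Multiset.card_cons]
      omega

def repP (s t : ℕ) (h : s = t) : Nat.Partition t :=
  ⟨Multiset.replicate s 1, fun {i} hi => by rw [Multiset.eq_of_mem_replicate hi]; omega,
   by simp [h]⟩

def twoP (s t : ℕ) (h : s + 2 = t) : Nat.Partition t :=
  ⟨2 ::ₘ Multiset.replicate s 1, fun {i} hi => by
      rcases Multiset.mem_cons.mp hi with h' | h'
      · omega
      · rw [Multiset.eq_of_mem_replicate h']; omega,
   by simp [Multiset.sum_cons]; omega⟩


lemma card_three {α : Type*} (a b c : α) (hab : a ≠ b) (hac : a ≠ c) (hbc : b ≠ c) :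
    Nat.card {x : α // x = a ∨ x = b ∨ x = c} = 3 := by
  have e : {x : α // x = a ∨ x = b ∨ x = c} ≃ ↥({a, b, c} : Set α) :=
    Equiv.subtypeEquivRight (fun x => by simp [Set.mem_insert_iff])
  rw [Nat.card_congr e, Nat.card_coe_set_eq]
  rw [Set.ncard_insert_of_notMem (by simp [hab, hac]), Set.ncard_pair hbc]


lemma part_small {s : ℕ} (hs : s ≤ 1) (q : Nat.Partition s) : q = repP s s rfl := by
  have pos : ∀ x ∈ q.parts, 0 < x := fun x hx => q.parts_pos hx
  have hc := myCard_le_sum q.parts pos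
  have hsum := q.parts_sum
  have hcs : Multiset.card q.parts = q.parts.sum := by
    rcases Nat.eq_zero_or_pos (Multiset.card q.parts) with h0 | hpos
    · have : q.parts = 0 := Multiset.card_eq_zero.mp h0
      simp [this]
    · omega
  have h2 := myEq_rep q.parts pos hcs
  rw [hsum] at h2
  apply Nat.Partition.ext
  rw [h2]
  rfl


lemma zuniv_eq : Nat.card {q : (ℕ × ℕ) × (Σ a : ℕ, Nat.Partition a) × (Σ a : ℕ, Nat.Partition a) //
    1 ≤ q.1.1 ∧ q.1.1 + 2 * q.1.2 + q.2.1.1 + q.2.2.1 = 2} = 3 := by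
  have hiff : ∀ q : (ℕ × ℕ) × (Σ a : ℕ, Nat.Partition a) × (Σ a : ℕ, Nat.Partition a),
      (1 ≤ q.1.1 ∧ q.1.1 + 2 * q.1.2 + q.2.1.1 + q.2.2.1 = 2) ↔
      (q = ((2, 0), ⟨0, repP 0 0 rfl⟩, ⟨0, repP 0 0 rfl⟩) ∨
       q = ((1, 0), ⟨1, repP 1 1 rfl⟩, ⟨0, repP 0 0 rfl⟩) ∨
       q = ((1, 0), ⟨0, repP 0 0 rfl⟩, ⟨1, repP 1 1 rfl⟩)) := by
    intro q
    constructor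
    · obtain ⟨⟨D, k⟩, ⟨a, l1⟩, ⟨b, l2⟩⟩ := q
      rintro ⟨h1, h2⟩
      simp only at h1 h2
      have hcase : (D = 2 ∧ k = 0 ∧ a = 0 ∧ b = 0) ∨ (D = 1 ∧ k = 0 ∧ a = 1 ∧ b = 0) ∨
          (D = 1 ∧ k = 0 ∧ a = 0 ∧ b = 1) := by omega
      rcases hcase with ⟨rfl, rfl, rfl, rfl⟩ | ⟨rfl, rfl, rfl, rfl⟩ | ⟨rfl, rfl, rfl, rfl⟩
      · left; rw [part_small (by omega) l1, part_small (by omega) l2]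
      · right; left; rw [part_small (by omega) l1, part_small (by omega) l2]
      · right; right; rw [part_small (by omega) l1, part_small (by omega) l2]
    · rintro (rfl | rfl | rfl) <;> exact ⟨by norm_num, by norm_num⟩
  rw [Nat.card_congr (Equiv.subtypeEquivRight hiff)]
  apply card_three
  · intro h; have := congrArg (fun q => q.1.1) h; simp at this
  · intro h; have := congrArg (fun q => q.1.1) h; simp at this
  · intro h; have := congrArg (fun q => q.2.1.1) h; simp at this


lemma BRT.ext' {m n : ℕ} {γ δ : BRT m n} (hk : γ.k = δ.k)
    (hp : γ.gp.parts = δ.gp.parts) (hq : γ.gm.parts = δ.gm.parts) : γ = δ := by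
  obtain ⟨k, kle, gp, gm⟩ := γ
  obtain ⟨k', kle', gp', gm'⟩ := δ
  dsimp at hk hp hq
  subst hk
  congr 1
  · exact Nat.Partition.ext hp
  · exact Nat.Partition.ext hq

def tri1 (m n : ℕ) (hm : 3 ≤ m) (hn : 3 ≤ n) : BRT m (n - 0) :=
  ⟨1, le_min (by omega) (by omega), twoP (m - 3) (m - 1) (by omega),
   repP (n - 1) (n - 0 - 1) (by omega)⟩

def tri2 (m n : ℕ) (hm : 3 ≤ m) (hn : 3 ≤ n) : BRT m (n - 0) :=
  ⟨1, le_min (by omega) (by omega), repP (m - 1) (m - 1) rfl,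
   twoP (n - 3) (n - 0 - 1) (by omega)⟩

def tri3 (m n : ℕ) (hm : 3 ≤ m) (hn : 3 ≤ n) : BRT m (n - 0) :=
  ⟨2, le_min (by omega) (by omega), repP (m - 2) (m - 2) rfl,
   repP (n - 2) (n - 0 - 2) (by omega)⟩

end aux

/-- Modified triples for `l = 3`: for `m, n ≥ 3` and `N = m + n - 3`, the Brauer
representation triples `γ` for `(m,n)` with `ht(γ) ≤ N` possessing at least one
`N`-excluded ancestor are exactly the three triples `(1, [2,1^{m-3}], 1^{n-1})`,
`(1, 1^{m-1}, [2,1^{n-3}])` and `(2, 1^{m-2}, 1^{n-2})`; in particular there are exactly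
`3 = Z_univ(2)` of them. -/
theorem stmt18 (m n : ℕ) (hm : 3 ≤ m) (hn : 3 ≤ n) :
    (∀ γ : BRT m (n - 0),
      (γ.ht ≤ m + n - 3 ∧
        ∃ d' : ℕ, ∃ γ' : BRT m (n - d'),
          IsAncestor m n 0 d' γ γ' ∧ m + n - 3 < γ'.ht) ↔
        ((γ.k = 1 ∧ γ.gp.parts = 2 ::ₘ Multiset.replicate (m - 3) 1 ∧
            γ.gm.parts = Multiset.replicate (n - 1) 1) ∨
         (γ.k = 1 ∧ γ.gp.parts = Multiset.replicate (m - 1) 1 ∧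
            γ.gm.parts = 2 ::ₘ Multiset.replicate (n - 3) 1) ∨
         (γ.k = 2 ∧ γ.gp.parts = Multiset.replicate (m - 2) 1 ∧
            γ.gm.parts = Multiset.replicate (n - 2) 1))) ∧
    Nat.card {γ : BRT m (n - 0) //
        γ.ht ≤ m + n - 3 ∧
        ∃ d' : ℕ, ∃ γ' : BRT m (n - d'),
          IsAncestor m n 0 d' γ γ' ∧ m + n - 3 < γ'.ht} = 3 ∧
    Zuniv 2 = 3 := by

  have hiff : ∀ γ : BRT m (n - 0),
      (γ.ht ≤ m + n - 3 ∧
        ∃ d' : ℕ, ∃ γ' : BRT m (n - d'),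
          IsAncestor m n 0 d' γ γ' ∧ m + n - 3 < γ'.ht) ↔
      ((γ.k = 1 ∧ γ.gp.parts = 2 ::ₘ Multiset.replicate (m - 3) 1 ∧
            γ.gm.parts = Multiset.replicate (n - 1) 1) ∨
         (γ.k = 1 ∧ γ.gp.parts = Multiset.replicate (m - 1) 1 ∧
            γ.gm.parts = 2 ::ₘ Multiset.replicate (n - 3) 1) ∨
         (γ.k = 2 ∧ γ.gp.parts = Multiset.replicate (m - 2) 1 ∧
            γ.gm.parts = Multiset.replicate (n - 2) 1)) := by
    intro γ
    constructor
    · rintro ⟨hht, d', γ', hanc, hex⟩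
      exact forward_classify hm hn hht hanc hex
    · intro h
      exact reverse_construct hm hn h
  have key : ∀ γ : BRT m (n - 0),
      ((γ.k = 1 ∧ γ.gp.parts = 2 ::ₘ Multiset.replicate (m - 3) 1 ∧
            γ.gm.parts = Multiset.replicate (n - 1) 1) ∨
         (γ.k = 1 ∧ γ.gp.parts = Multiset.replicate (m - 1) 1 ∧
            γ.gm.parts = 2 ::ₘ Multiset.replicate (n - 3) 1) ∨
         (γ.k = 2 ∧ γ.gp.parts = Multiset.replicate (m - 2) 1 ∧
            γ.gm.parts = Multiset.replicate (n - 2) 1)) ↔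
      (γ = tri1 m n hm hn ∨ γ = tri2 m n hm hn ∨ γ = tri3 m n hm hn) := by
    intro γ
    constructor
    · rintro (⟨hk, h1, h2⟩ | ⟨hk, h1, h2⟩ | ⟨hk, h1, h2⟩)
      · exact Or.inl (BRT.ext' hk h1 h2)
      · exact Or.inr (Or.inl (BRT.ext' hk h1 h2))
      · exact Or.inr (Or.inr (BRT.ext' hk h1 h2))
    · rintro (rfl | rfl | rfl)
      · exact Or.inl ⟨rfl, rfl, rfl⟩
      · exact Or.inr (Or.inl ⟨rfl, rfl, rfl⟩)
      · exact Or.inr (Or.inr ⟨rfl, rfl, rfl⟩)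
  have h12 : tri1 m n hm hn ≠ tri2 m n hm hn := by
    intro h
    have := congrArg (fun γ : BRT m (n - 0) => Multiset.count 2 γ.gp.parts) h
    simp [tri1, tri2, twoP, repP, Multiset.count_cons, Multiset.count_replicate] at this
  have h13 : tri1 m n hm hn ≠ tri3 m n hm hn := by
    intro h
    have := congrArg BRT.k h
    simp [tri1, tri3] at this
  have h23 : tri2 m n hm hn ≠ tri3 m n hm hn := by
    intro h
    have := congrArg BRT.k h
    simp [tri2, tri3] at this
  refine ⟨hiff, ?_, ?_⟩
  · rw [Nat.card_congr (Equiv.subtypeEquivRight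
      (fun γ => (hiff γ).trans (key γ)))]
    exact card_three _ _ _ h12 h13 h23
  · unfold Zuniv
    exact zuniv_eq
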